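/- Let E be a finite-dimensional vector space over a field k, let v be a prevaluation on E, and let L = {L₁,…,L_r} be a frame in E. Then the following are equivalent: (i) every subspace F_{v≥a} = {e ∈ E : v(e) ≥ a} ∪ {0}, a ∈ ℚ, is the sum of some subset of the subspaces L₁,…,L_r; (ii) for every nonzero e ∈ E with decomposition e = Σ_i e_i, e_i ∈ L_i, one has v(e) = min{ v(e_i) : e_i ≠ 0 }. -/

import Mathlib

/-- A prevaluation on a vector space `E` over a field `k` (value at `0` irrelevant). -/
def IsPrevaluation (k : Type*) [Field k] {E : Type*} [AddCommGroup E] [Module k E]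
    (v : E → ℚ) : Prop :=
  (∀ (c : k) (e : E), c ≠ 0 → e ≠ 0 → v (c • e) = v e) ∧
  (∀ e₁ e₂ : E, e₁ ≠ 0 → e₂ ≠ 0 → e₁ + e₂ ≠ 0 → min (v e₁) (v e₂) ≤ v (e₁ + e₂))

/-- A frame in `E`: a finite collection of one-dimensional subspaces whose
(internal) direct sum is `E`. -/
def IsFrame {k E : Type*} [Field k] [AddCommGroup E] [Module k E]
    {ι : Type*} [Fintype ι] [DecidableEq ι] (L : ι → Submodule k E) : Prop :=
  (∀ i, Module.finrank k (L i) = 1) ∧ DirectSum.IsInternal L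

section Helpers
variable {k E : Type*} [Field k] [AddCommGroup E] [Module k E] {r : ℕ}
  {L : Fin r → Submodule k E}

lemma frame_sum_eq_zero (hI : DirectSum.IsInternal L) (c : Fin r → E)
    (hc : ∀ i, c i ∈ L i) (h : ∑ i, c i = 0) (i : Fin r) : c i = 0 := by
  classical
  set x : DirectSum (Fin r) (fun j => L j) :=
    ∑ j, DirectSum.of (fun j => (L j : Submodule k E)) j ⟨c j, hc j⟩ with hxdef
  have hFx : DirectSum.coeAddMonoidHom L x = 0 := by
    rw [hxdef, map_sum]
    simpa using h
  have hx0 : x = 0 := hI.injective (by rw [hFx]; simp)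
  have h1 : (x i : E) = c i := by
    rw [hxdef, DFinsupp.finset_sum_apply]
    push_cast
    simp only [DirectSum.coe_of_apply]
    rw [Finset.sum_eq_single i (fun b _ hb => by simp [hb]) (by simp)]
    simp
  rw [hx0] at h1
  simpa using h1.symm

lemma frame_single_le {s : Finset (Fin r)} {i : Fin r} (hi : i ∈ s) :
    L i ≤ ∑ j ∈ s, L j :=
  Finset.single_le_sum (f := L) (fun _ _ => zero_le) hi

lemma exists_decomp_of_mem_sum (s : Finset (Fin r)) (e : E) (he : e ∈ ∑ i ∈ s, L i) :
    ∃ c : Fin r → E, (∀ i, c i ∈ L i) ∧ (∀ i ∉ s, c i = 0) ∧ e = ∑ i, c i := by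
  classical
  induction s using Finset.induction_on generalizing e with
  | empty =>
    simp only [Finset.sum_empty] at he
    refine ⟨0, by simp, by simp, by simpa using he⟩
  | @insert a s ha ih =>
    rw [Finset.sum_insert ha, Submodule.add_eq_sup, Submodule.mem_sup] at he
    obtain ⟨y, hy, z, hz, rfl⟩ := he
    obtain ⟨c, hc, hc0, rfl⟩ := ih z hz
    refine ⟨Function.update c a y, ?_, ?_, ?_⟩
    · intro i
      rcases eq_or_ne i a with rfl | h
      · simpa using hy
      · simpa [Function.update_of_ne h] using hc i
    · intro i hi
      have h1 : i ≠ a := fun h => hi (h ▸ Finset.mem_insert_self a s)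
      have h2 : i ∉ s := fun h => hi (Finset.mem_insert_of_mem h)
      simp [Function.update_of_ne h1, hc0 i h2]
    · have hca : c a = 0 := hc0 a ha
      rw [Finset.sum_update_of_mem (Finset.mem_univ a)]
      rw [← Finset.add_sum_erase _ c (Finset.mem_univ a), hca, zero_add, Finset.erase_eq]

lemma mem_sum_of_decomp (s : Finset (Fin r)) (c : Fin r → E)
    (hc : ∀ i, c i ∈ L i) (hc0 : ∀ i ∉ s, c i = 0) :
    (∑ i, c i) ∈ ∑ i ∈ s, L i := by
  classical
  rw [← Finset.sum_subset (Finset.subset_univ s) (fun i _ hi => hc0 i hi)]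
  exact Submodule.sum_mem _ fun i hi => frame_single_le hi (hc i)

end Helpers

section Line
variable {k E : Type*} [Field k] [AddCommGroup E] [Module k E] {r : ℕ}
  {L : Fin r → Submodule k E}

lemma line_v_const {i : Fin r} (hfin : Module.finrank k (L i) = 1) (v : E → ℚ)
    (hv1 : ∀ (c : k) (e : E), c ≠ 0 → e ≠ 0 → v (c • e) = v e)
    {x y : E} (hx : x ∈ L i) (hx0 : x ≠ 0) (hy : y ∈ L i) (hy0 : y ≠ 0) :
    v y = v x := by
  obtain ⟨vv, hvv0, hvv⟩ := (finrank_eq_one_iff' (K := k) (V := L i)).mp hfin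
  have key : ∀ z : E, z ∈ L i → ∃ c : k, z = c • x := by
    intro z hz
    obtain ⟨cx, hcx⟩ := hvv ⟨x, hx⟩
    obtain ⟨cz, hcz⟩ := hvv ⟨z, hz⟩
    have hcx0 : cx ≠ 0 := by
      rintro rfl
      apply hx0
      have := congrArg (Subtype.val) hcx
      simpa using this.symm
    refine ⟨cz * cx⁻¹, ?_⟩
    have h1 : cx • (vv : E) = x := congrArg Subtype.val hcx
    have h2 : cz • (vv : E) = z := congrArg Subtype.val hcz
    rw [← h1, ← h2, smul_smul]
    field_simp
  obtain ⟨c, rfl⟩ := key y hy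
  have hc0 : c ≠ 0 := by rintro rfl; simp at hy0
  exact hv1 c x hc0 hx0
end Line


/-- A frame `L` is adapted to a prevaluation `v` (i): every subspace
`F_{v ≥ a}` is a sum of some subset of the members of `L`) if and only if (ii):
for every nonzero `e` with decomposition `e = ∑ i, c i`, `c i ∈ L i`, the value
`v e` is the minimum of the `v (c i)` over the nonzero components `c i`. -/
theorem stmt7 {k E : Type*} [Field k] [AddCommGroup E] [Module k E] [FiniteDimensional k E]
    {r : ℕ} (v : E → ℚ) (hv : IsPrevaluation k v)
    (L : Fin r → Submodule k E) (hL : IsFrame L) :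
    (∀ a : ℚ, ∃ s : Finset (Fin r),
        {e : E | e = 0 ∨ a ≤ v e} = ↑(∑ i ∈ s, L i)) ↔
    (∀ e : E, e ≠ 0 → ∀ c : Fin r → E, (∀ i, c i ∈ L i) → e = ∑ i, c i →
        IsLeast {q : ℚ | ∃ i, c i ≠ 0 ∧ q = v (c i)} (v e)) := by
  classical
  obtain ⟨hfin, hI⟩ := hL
  have htop : (⊤ : Submodule k E) ≤ ∑ i, L i := by
    rw [← hI.submodule_iSup_eq_top]
    exact iSup_le fun i => frame_single_le (Finset.mem_univ i)
  constructor
  · intro h e he c hc hce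
    -- lower bound
    have hlb : ∀ i, c i ≠ 0 → v e ≤ v (c i) := by
      intro i hi
      obtain ⟨s, hs⟩ := h (v e)
      have heS : e ∈ ∑ j ∈ s, L j :=
        (Set.ext_iff.mp hs e).mp (Or.inr le_rfl)
      obtain ⟨d, hd, hd0, hde⟩ := exists_decomp_of_mem_sum s e heS
      have hcd : ∀ j, c j = d j := by
        intro j
        have h2 := frame_sum_eq_zero hI (c - d) (fun j => sub_mem (hc j) (hd j))
          (by simp only [Pi.sub_apply, Finset.sum_sub_distrib, ← hce, ← hde, sub_self]) j
        simpa [sub_eq_zero] using h2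
      have his : i ∈ s := by
        by_contra hns
        exact hi ((hcd i).trans (hd0 i hns))
      have h3 : c i ∈ (↑(∑ j ∈ s, L j) : Set E) := frame_single_le his (hc i)
      rw [← hs] at h3
      exact h3.resolve_left hi
    -- the set of indices with nonzero component is nonempty
    have hne : (Finset.univ.filter fun i => c i ≠ 0).Nonempty := by
      by_contra hcon
      rw [Finset.not_nonempty_iff_eq_empty, Finset.filter_eq_empty_iff] at hcon
      exact he (hce.trans (Finset.sum_eq_zero fun i _ => not_not.mp (hcon (Finset.mem_univ i))))
    set t := Finset.univ.filter fun i => c i ≠ 0 with ht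
    set a' := t.inf' hne fun i => v (c i) with ha'
    have hub : a' ≤ v e := by
      obtain ⟨s', hs'⟩ := h a'
      have h4 : e ∈ ∑ j ∈ s', L j := by
        rw [hce]
        refine Submodule.sum_mem _ fun i _ => ?_
        by_cases hci : c i = 0
        · rw [hci]; exact Submodule.zero_mem _
        · have h5 : c i ∈ {e : E | e = 0 ∨ a' ≤ v e} :=
            Or.inr (Finset.inf'_le _ (Finset.mem_filter.mpr ⟨Finset.mem_univ i, hci⟩))
          rw [hs'] at h5
          exact h5
      have h6 : e ∈ {e : E | e = 0 ∨ a' ≤ v e} := by rw [hs']; exact h4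
      exact h6.resolve_left he
    obtain ⟨j, hjt, hja⟩ := Finset.exists_mem_eq_inf' hne fun i => v (c i)
    have hj0 : c j ≠ 0 := (Finset.mem_filter.mp hjt).2
    have heq : v e = v (c j) := le_antisymm (hlb j hj0) (hja ▸ hub)
    exact ⟨⟨j, hj0, heq⟩, fun q ⟨i, hi, hq⟩ => hq ▸ hlb i hi⟩
  · intro h a
    have hbot : ∀ i, L i ≠ ⊥ := by
      intro i hb
      have := hfin i
      rw [hb] at this
      simp at this
    choose x hxmem hx0 using fun i => Submodule.exists_mem_ne_zero_of_ne_bot (hbot i)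
    refine ⟨Finset.univ.filter fun i => a ≤ v (x i), ?_⟩
    ext e
    simp only [Set.mem_setOf_eq, SetLike.mem_coe]
    constructor
    · intro he
      by_cases he0 : e = 0
      · rw [he0]; exact Submodule.zero_mem _
      · have hae : a ≤ v e := he.resolve_left he0
        obtain ⟨c, hc, _, hce⟩ := exists_decomp_of_mem_sum Finset.univ e
          (htop (Submodule.mem_top))
        obtain ⟨_, hlb⟩ := h e he0 c hc hce
        rw [hce]
        refine mem_sum_of_decomp _ c hc fun i hi => ?_
        by_contra hci
        apply hi
        rw [Finset.mem_filter]
        refine ⟨Finset.mem_univ i, ?_⟩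
        have h7 : v e ≤ v (c i) := hlb ⟨i, hci, rfl⟩
        have h8 : v (c i) = v (x i) :=
          line_v_const (hfin i) v hv.1 (hxmem i) (hx0 i) (hc i) hci
        exact hae.trans (h7.trans_eq h8)
    · intro he
      by_cases he0 : e = 0
      · exact Or.inl he0
      right
      obtain ⟨c, hc, hc0, hce⟩ := exists_decomp_of_mem_sum _ e he
      obtain ⟨⟨j, hj0, hjv⟩, _⟩ := h e he0 c hc hce
      have hjs : j ∈ Finset.univ.filter fun i => a ≤ v (x i) := by
        by_contra hns
        exact hj0 (hc0 j hns)
      have h9 : v (c j) = v (x j) :=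
        line_v_const (hfin j) v hv.1 (hxmem j) (hx0 j) (hc j) hj0
      rw [hjv, h9]
      exact (Finset.mem_filter.mp hjs).2
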